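/- For every natural number n ≥ 1, the unique solution t_n ∈ (0,1) of κ₁(t_n) = n satisfies e^{−π/√(6(n − 1/24))} < t_n < 1. -/

import Mathlib

open Real

/-- `κ₁(t) = ∑_{j≥1} j·t^j/(1−t^j)`. -/
noncomputable def kappa1 (t : ℝ) : ℝ :=
  ∑' j : ℕ, ((j : ℝ) + 1) * t ^ (j + 1) / (1 - t ^ (j + 1))

namespace Stmt9Aux

/-- Shifted coefficient-geometric sum: `∑ (j+1) y^(j+1) = y/(1-y)^2`. -/
lemma hasSum_shift {y : ℝ} (hy : |y| < 1) :
    HasSum (fun j : ℕ => ((j : ℝ) + 1) * y ^ (j + 1)) (y / (1 - y) ^ 2) := by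
  have h := hasSum_coe_mul_geometric_of_norm_lt_one (𝕜 := ℝ) (by rwa [Real.norm_eq_abs])
  have h2 := (hasSum_nat_add_iff' (f := fun n : ℕ => (n : ℝ) * y ^ n) 1).mpr h
  simpa using h2

/-- key inequality : `u^2 * exp (-u) < (1 - exp (-u))^2` for `u > 0`. -/
lemma key_ineq {u : ℝ} (hu : 0 < u) :
    u ^ 2 * Real.exp (-u) < (1 - Real.exp (-u)) ^ 2 := by
  have hs : u / 2 < Real.sinh (u / 2) := self_lt_sinh_iff.mpr (by linarith)
  have hsinh : Real.sinh (u / 2) = (Real.exp (u / 2) - Real.exp (-(u / 2))) / 2 :=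
    Real.sinh_eq _
  have hlt : u * Real.exp (-(u / 2)) < 1 - Real.exp (-u) := by
    have h1 : 1 - Real.exp (-u) = Real.exp (-(u / 2)) *
        (Real.exp (u / 2) - Real.exp (-(u / 2))) := by
      rw [mul_sub, ← Real.exp_add, ← Real.exp_add, show -(u / 2) + u / 2 = 0 by ring,
        show -(u / 2) + -(u / 2) = -u by ring, Real.exp_zero]
    have h2 : u < Real.exp (u / 2) - Real.exp (-(u / 2)) := by
      rw [hsinh] at hs; linarith
    rw [h1]
    have he : 0 < Real.exp (-(u / 2)) := Real.exp_pos _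
    calc u * Real.exp (-(u / 2)) = Real.exp (-(u / 2)) * u := by ring
      _ < Real.exp (-(u / 2)) * (Real.exp (u / 2) - Real.exp (-(u / 2))) := by
          exact (mul_lt_mul_iff_right₀ he).mpr h2
  have hnn : 0 ≤ u * Real.exp (-(u / 2)) :=
    mul_nonneg hu.le (Real.exp_pos _).le
  have := pow_lt_pow_left₀ hlt hnn (n := 2) two_ne_zero
  calc u ^ 2 * Real.exp (-u) = (u * Real.exp (-(u / 2))) ^ 2 := by
        rw [mul_pow, ← Real.exp_nat_mul]; ring_nf
    _ < (1 - Real.exp (-u)) ^ 2 := this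

/-- For `0 < t < 1`, `κ₁(t) < π² / (6 (log t)²)`. -/
lemma kappa1_lt {t : ℝ} (ht0 : 0 < t) (ht1 : t < 1) :
    kappa1 t < Real.pi ^ 2 / (6 * Real.log t ^ 2) := by
  set s : ℝ := -Real.log t with hs_def
  have hs : 0 < s := by
    have := Real.log_neg ht0 ht1
    simp only [hs_def]; linarith
  have htexp : t = Real.exp (-s) := by
    simp only [hs_def, neg_neg, Real.exp_log ht0]
  -- the double-indexed family
  set F : ℕ → ℕ → ℝ := fun j k => ((j : ℝ) + 1) * t ^ ((j + 1) * (k + 1)) with hF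
  have htpow : ∀ m : ℕ, 0 < t ^ m := fun m => pow_pos ht0 m
  have htpow1 : ∀ m : ℕ, 1 ≤ m → t ^ m < 1 := fun m hm =>
    pow_lt_one₀ ht0.le ht1 (by omega)
  -- summability of the uncurried family
  have hsum_mulgeo : Summable (fun n : ℕ => (n : ℝ) * t ^ n) := by
    have := summable_pow_mul_geometric_of_norm_lt_one (R := ℝ) 1
      (r := t) (by rw [Real.norm_eq_abs, abs_of_pos ht0]; exact ht1)
    simpa using this
  have hsum_f : Summable (fun j : ℕ => ((j : ℝ) + 1) * t ^ (j + 1)) := by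
    have := (summable_nat_add_iff (f := fun n : ℕ => (n : ℝ) * t ^ n) 1).mpr hsum_mulgeo
    simpa [Nat.cast_add] using this
  have hsum_g : Summable (fun k : ℕ => t ^ k) :=
    summable_geometric_of_lt_one ht0.le ht1
  have hsumF : Summable (Function.uncurry F) := by
    apply Summable.of_nonneg_of_le
      (f := fun p : ℕ × ℕ => (((p.1 : ℝ) + 1) * t ^ (p.1 + 1)) * t ^ p.2)
    · intro p
      exact mul_nonneg (by positivity) (htpow _).le
    · rintro ⟨j, k⟩
      simp only [Function.uncurry, hF]
      rw [mul_assoc]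
      apply mul_le_mul_of_nonneg_left _ (by positivity)
      calc t ^ ((j + 1) * (k + 1)) ≤ t ^ ((j + 1) + k) := by
            apply pow_le_pow_of_le_one ht0.le ht1.le
            nlinarith [Nat.le_refl j]
        _ = t ^ (j + 1) * t ^ k := pow_add t _ _
    · exact hsum_f.mul_of_nonneg hsum_g
        (fun j => by positivity) (fun k => (htpow _).le)
  -- inner sums over k (fixed j)
  have hinner_j : ∀ j : ℕ, HasSum (fun k => F j k)
      (((j : ℝ) + 1) * t ^ (j + 1) / (1 - t ^ (j + 1))) := by
    intro j
    have hx0 : (0:ℝ) ≤ t ^ (j + 1) := (htpow _).le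
    have hx1 : t ^ (j + 1) < 1 := htpow1 _ (by omega)
    have hgeo := hasSum_geometric_of_lt_one hx0 hx1
    have h1 := hgeo.mul_left (((j : ℝ) + 1) * t ^ (j + 1))
    have h2 : (fun k => F j k)
        = fun k => (((j : ℝ) + 1) * t ^ (j + 1)) * (t ^ (j + 1)) ^ k := by
      funext k
      simp only [hF, ← pow_mul, mul_assoc, ← pow_add]
      congr 2
      ring
    rw [h2, div_eq_mul_inv]
    exact h1
  -- inner sums over j (fixed k)
  have hinner_k : ∀ k : ℕ, HasSum (fun j => F j k)
      (t ^ (k + 1) / (1 - t ^ (k + 1)) ^ 2) := by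
    intro k
    have hy : |t ^ (k + 1)| < 1 := by
      rw [abs_of_pos (htpow _)]; exact htpow1 _ (by omega)
    have h1 := hasSum_shift hy
    have h2 : (fun j => F j k) = fun j : ℕ => ((j : ℝ) + 1) * (t ^ (k + 1)) ^ (j + 1) := by
      funext j
      simp only [hF, ← pow_mul]
      congr 2
      ring
    rw [h2]
    exact h1
  -- rewrite kappa1 as the k-indexed sum
  have hk1 : kappa1 t = ∑' k : ℕ, t ^ (k + 1) / (1 - t ^ (k + 1)) ^ 2 := by
    have h1 : kappa1 t = ∑' (j) (k), F j k := by
      unfold kappa1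
      exact tsum_congr fun j => ((hinner_j j).tsum_eq).symm
    have h2 : (∑' (k) (j), F j k) = ∑' (j) (k), F j k :=
      Summable.tsum_comm' hsumF (fun j => (hinner_j j).summable) (fun k => (hinner_k k).summable)
    rw [h1, ← h2]
    exact tsum_congr fun k => (hinner_k k).tsum_eq
  -- termwise strict bound
  have hbound : ∀ k : ℕ, t ^ (k + 1) / (1 - t ^ (k + 1)) ^ 2
      < 1 / (((k : ℝ) + 1) ^ 2 * s ^ 2) := by
    intro k
    set u : ℝ := ((k : ℝ) + 1) * s with hu_def
    have hu : 0 < u := by positivity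
    have hy : t ^ (k + 1) = Real.exp (-u) := by
      rw [htexp, ← Real.exp_nat_mul]
      congr 1
      push_cast [hu_def]
      ring
    have hkey := key_ineq hu
    have h1y : 0 < 1 - Real.exp (-u) := by
      have : Real.exp (-u) < 1 := Real.exp_lt_one_iff.mpr (by linarith)
      linarith
    rw [hy, div_lt_div_iff₀ (by positivity) (by positivity)]
    calc Real.exp (-u) * (((k : ℝ) + 1) ^ 2 * s ^ 2)
        = u ^ 2 * Real.exp (-u) := by rw [hu_def]; ring
      _ < (1 - Real.exp (-u)) ^ 2 := hkey
      _ = 1 * (1 - Real.exp (-u)) ^ 2 := (one_mul _).symm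
  -- the majorant sums to π²/(6 s²)
  have hmaj : HasSum (fun k : ℕ => 1 / (((k : ℝ) + 1) ^ 2 * s ^ 2))
      (Real.pi ^ 2 / (6 * s ^ 2)) := by
    have h := hasSum_zeta_two
    have h2 := (hasSum_nat_add_iff' (f := fun n : ℕ => (1:ℝ) / (n : ℝ) ^ 2) 1).mpr h
    have h3 := h2.mul_right (1 / s ^ 2)
    convert h3 using 1
    · rfl
    · funext k
      push_cast
      rw [div_mul_div_comm, one_mul]
    · simp only [Finset.sum_range_one, Nat.cast_zero]
      norm_num
      ring
  -- conclude
  rw [hk1]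
  have hstrict := Summable.tsum_lt_tsum_of_nonneg
    (f := fun k : ℕ => t ^ (k + 1) / (1 - t ^ (k + 1)) ^ 2)
    (g := fun k : ℕ => 1 / (((k : ℝ) + 1) ^ 2 * s ^ 2))
    (fun k => by
      have h1y : 0 < 1 - t ^ (k + 1) := by
        have := htpow1 (k + 1) (by omega); linarith
      positivity)
    (fun k => (hbound k).le) (hbound 0) hmaj.summable
  calc (∑' k : ℕ, t ^ (k + 1) / (1 - t ^ (k + 1)) ^ 2)
      < ∑' k : ℕ, 1 / (((k : ℝ) + 1) ^ 2 * s ^ 2) := hstrict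
    _ = Real.pi ^ 2 / (6 * s ^ 2) := hmaj.tsum_eq
    _ = Real.pi ^ 2 / (6 * Real.log t ^ 2) := by
        rw [hs_def, neg_pow]; norm_num

end Stmt9Aux

/-- The solution `t_n` of `κ₁(t_n) = n` satisfies `e^{−π/√(6(n−1/24))} < t_n < 1`. -/
theorem stmt9 (n : ℕ) (hn : 1 ≤ n) (t : ℝ) (ht : t ∈ Set.Ioo (0 : ℝ) 1)
    (htn : kappa1 t = n) :
    Real.exp (-Real.pi / Real.sqrt (6 * ((n : ℝ) - 1 / 24))) < t ∧ t < 1 := by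
  obtain ⟨ht0, ht1⟩ := ht
  refine ⟨?_, ht1⟩
  by_contra hcon
  push_neg at hcon
  set c : ℝ := 6 * ((n : ℝ) - 1 / 24) with hc_def
  have hn1 : (1:ℝ) ≤ (n:ℝ) := by exact_mod_cast hn
  have hc : 0 < c := by rw [hc_def]; linarith
  have hsqrtc : 0 < Real.sqrt c := Real.sqrt_pos.mpr hc
  rw [neg_div] at hcon
  set s₀ : ℝ := Real.pi / Real.sqrt c with hs0_def
  have hs₀ : 0 < s₀ := div_pos Real.pi_pos hsqrtc
  have hlog : Real.log t ≤ -s₀ := by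
    have h1 : Real.log t ≤ Real.log (Real.exp (-s₀)) := Real.log_le_log ht0 hcon
    rwa [Real.log_exp] at h1
  have hsq : s₀ ^ 2 ≤ Real.log t ^ 2 := by
    nlinarith [hlog, hs₀]
  have hs0sq : s₀ ^ 2 = Real.pi ^ 2 / c := by
    rw [hs0_def, div_pow, Real.sq_sqrt hc.le]
  have hlogsq : 0 < Real.log t ^ 2 := lt_of_lt_of_le (by positivity) hsq
  have hmain := Stmt9Aux.kappa1_lt ht0 ht1
  have hle : Real.pi ^ 2 / (6 * Real.log t ^ 2) ≤ Real.pi ^ 2 / (6 * s₀ ^ 2) := by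
    apply div_le_div_of_nonneg_left (by positivity) (by positivity)
    nlinarith
  have heq : Real.pi ^ 2 / (6 * s₀ ^ 2) = (n : ℝ) - 1 / 24 := by
    rw [hs0sq]
    have hpi : Real.pi ^ 2 ≠ 0 := by positivity
    field_simp [hc_def]
    ring
  rw [htn] at hmain
  have : (n : ℝ) < (n : ℝ) - 1 / 24 := by
    calc (n : ℝ) < Real.pi ^ 2 / (6 * Real.log t ^ 2) := hmain
      _ ≤ Real.pi ^ 2 / (6 * s₀ ^ 2) := hle
      _ = (n : ℝ) - 1 / 24 := heq
  linarith
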